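/- Fix q ∈ ((31 − 12√3)/23, 1/2] and set δ* = 4/(1−q)². Define F(δ) = (3/256)·(4 − δ·(1−q)²)·(64 − 16·δ·(1−q)² + δ³·(1−q)⁴·(1+q)²), and let g_δ(x) = x·(1 − δ·(1−x)·(x−q)). Then: (i) for every δ ∈ (0, δ*], the inequality g_δ²((1+q)/2) < (1+q)/6 holds if and only if F(δ) < 1; and (ii) there exists a unique δ_q ∈ (0, δ*) such that F(δ) < 1 for all δ ∈ (δ_q, δ*] and F(δ) ≥ 1 for all δ ∈ (0, δ_q]. -/

import Mathlib

lemma PPI.P1 (t : ℝ) (h0 : 0 ≤ t) (h3 : t ≤ 3) :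
    256 ≤ 3*(4-t)*(64-16*t+(27/4)*t^3) := by
  nlinarith [mul_nonneg (mul_nonneg (pow_nonneg h0 3) (by linarith : (0:ℝ) ≤ 3-t)) h0,
    sq_nonneg (t-2), sq_nonneg t, mul_nonneg h0 (sq_nonneg (t-2)),
    mul_nonneg (pow_nonneg h0 3) (by linarith : (0:ℝ) ≤ 3-t)]

lemma PPI.P2 (t : ℝ) (h1 : 39/10 ≤ t) (h4 : t ≤ 4) :
    3*(4-t)*(64-16*t+9*t^3) < 256 := by
  nlinarith [mul_nonneg (by linarith : (0:ℝ) ≤ 4-t) (by linarith : (0:ℝ) ≤ t - 39/10),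
    sq_nonneg (t-4), mul_nonneg (sq_nonneg (t-4)) (by linarith : (0:ℝ) ≤ t)]

lemma PPI.Q2 (u v : ℝ) (h3 : 3 ≤ u) (huv : u ≤ v) (h4 : v ≤ 4) :
    v^3*(4-v) ≤ u^3*(4-u) := by
  have hu : (0:ℝ) ≤ u^2*(u-4)+9 := by nlinarith [mul_nonneg (by linarith : (0:ℝ) ≤ u-3) (by nlinarith : (0:ℝ) ≤ u^2-u-3)]
  have hv3 : 3 ≤ v := le_trans h3 huv
  have hv : (0:ℝ) ≤ v^2*(v-4)+9 := by nlinarith [mul_nonneg (by linarith : (0:ℝ) ≤ v-3) (by nlinarith : (0:ℝ) ≤ v^2-v-3)]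
  have hp : (0:ℝ) ≤ u*v*(u+v-4) - 18 := by nlinarith [mul_nonneg (by linarith : (0:ℝ) ≤ u-3) (by linarith : (0:ℝ) ≤ v-3)]
  nlinarith [mul_nonneg (by linarith : (0:ℝ) ≤ v-u) hu,
    mul_nonneg (by linarith : (0:ℝ) ≤ v-u) hv,
    mul_nonneg (by linarith : (0:ℝ) ≤ v-u) hp]

lemma PPI.mono34 (A B u v : ℝ) (hA : 0 < A) (hB : 0 ≤ B)
    (h3 : 3 ≤ u) (huv : u < v) (h4 : v ≤ 4) :
    A*((4-v)*(64-16*v)) + B*(v^3*(4-v)) < A*((4-u)*(64-16*u)) + B*(u^3*(4-u)) := by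
  have h1 : (4-v)^2 < (4-u)^2 := by nlinarith
  have h2 : v^3*(4-v) ≤ u^3*(4-u) := PPI.Q2 u v h3 huv.le h4
  nlinarith [mul_pos hA (by linarith : (0:ℝ) < (4-u)^2 - (4-v)^2),
    mul_nonneg hB (by linarith : (0:ℝ) ≤ u^3*(4-u) - v^3*(4-v))]

lemma PPI.pos3 (A B t : ℝ) (hA : 0 < A) (hc : 27*A ≤ 4*B) (h0 : 0 ≤ t) (h3 : t ≤ 3) :
    256*A ≤ 3*(A*((4-t)*(64-16*t)) + B*(t^3*(4-t))) := by
  have hP := PPI.P1 t h0 h3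
  nlinarith [mul_nonneg (mul_nonneg (pow_nonneg h0 3) (by linarith : (0:ℝ) ≤ 4-t)) (by linarith : (0:ℝ) ≤ 4*B-27*A),
    mul_le_mul_of_nonneg_left hP hA.le]

lemma PPI.neg4 (A B t : ℝ) (hA : 0 < A) (hc : B ≤ 9*A) (h1 : 39/10 ≤ t) (h4 : t ≤ 4) :
    3*(A*((4-t)*(64-16*t)) + B*(t^3*(4-t))) < 256*A := by
  have hP := PPI.P2 t h1 h4
  nlinarith [mul_nonneg (mul_nonneg (pow_nonneg (by linarith : (0:ℝ) ≤ t) 3) (by linarith : (0:ℝ) ≤ 4-t)) (by linarith : (0:ℝ) ≤ 9*A-B),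
    mul_lt_mul_of_pos_left hP hA]

set_option maxHeartbeats 1000000 in
/-- Fix `q ∈ ((31 − 12√3)/23, 1/2]`, set `δ* = 4/(1−q)²`, define
`F(δ) = (3/256)(4 − δ(1−q)²)(64 − 16δ(1−q)² + δ³(1−q)⁴(1+q)²)` and
`g_δ x = x (1 − δ(1−x)(x−q))`.  Then:
(i) for every `δ ∈ (0, δ*]`, `g_δ²((1+q)/2) < (1+q)/6 ↔ F(δ) < 1`;
(ii) there is a unique `δ_q ∈ (0, δ*)` with `F < 1` on `(δ_q, δ*]` and
`F ≥ 1` on `(0, δ_q]`. -/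
theorem ppi_second_period3_condition (q : ℝ)
    (hq : q ∈ Set.Ioc ((31 - 12 * Real.sqrt 3) / 23) (1/2))
    (F : ℝ → ℝ)
    (hF : ∀ δ : ℝ, F δ = (3 / 256) * (4 - δ * (1 - q) ^ 2) *
      (64 - 16 * δ * (1 - q) ^ 2 + δ ^ 3 * (1 - q) ^ 4 * (1 + q) ^ 2))
    (g : ℝ → ℝ → ℝ)
    (hg : ∀ δ x : ℝ, g δ x = x * (1 - δ * (1 - x) * (x - q))) :
    (∀ δ ∈ Set.Ioc (0:ℝ) (4 / (1 - q) ^ 2),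
      ((g δ)^[2] ((1 + q) / 2) < (1 + q) / 6 ↔ F δ < 1)) ∧
    (∃! δq : ℝ, δq ∈ Set.Ioo (0:ℝ) (4 / (1 - q) ^ 2) ∧
      (∀ δ ∈ Set.Ioc δq (4 / (1 - q) ^ 2), F δ < 1) ∧
      (∀ δ ∈ Set.Ioc (0:ℝ) δq, 1 ≤ F δ)) := by
  obtain ⟨hq1, hq2⟩ := hq
  have hs3 : Real.sqrt 3 < 7/4 := by
    rw [show (7/4:ℝ) = Real.sqrt ((7/4)^2) by rw [Real.sqrt_sq]; norm_num]
    exact Real.sqrt_lt_sqrt (by norm_num) (by norm_num)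
  have hs0 : (0:ℝ) ≤ Real.sqrt 3 := Real.sqrt_nonneg 3
  have hssq : Real.sqrt 3 ^ 2 = 3 := Real.sq_sqrt (by norm_num)
  have hq0 : (0:ℝ) < q := by
    have : (31 - 12 * Real.sqrt 3) / 23 > 0 := by nlinarith
    linarith
  have hA : (0:ℝ) < (1-q)^2 := by nlinarith
  have hB : (0:ℝ) < (1+q)^2 := by nlinarith
  have hc1 : 27*(1-q)^2 ≤ 4*(1+q)^2 := by
    have h1 : 0 < 23*q - (31 - 12*Real.sqrt 3) := by linarith [(div_lt_iff₀ (by norm_num : (0:ℝ) < 23)).mp hq1]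
    have h2 : 0 < (31 + 12*Real.sqrt 3) - 23*q := by nlinarith
    nlinarith [mul_pos h1 h2]
  have hc2 : (1+q)^2 ≤ 9*(1-q)^2 := by nlinarith
  -- part (i)
  have key : ∀ δ : ℝ, (g δ)^[2] ((1 + q) / 2) = (1 + q) / 6 * F δ := by
    intro δ
    have h2 : (g δ)^[2] ((1 + q) / 2) = g δ (g δ ((1 + q) / 2)) := by
      simp [Function.iterate_succ_apply']
    rw [h2, hg, hg, hF]; ring
  have part1 : ∀ δ ∈ Set.Ioc (0:ℝ) (4 / (1 - q) ^ 2),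
      ((g δ)^[2] ((1 + q) / 2) < (1 + q) / 6 ↔ F δ < 1) := by
    intro δ _
    rw [key δ]
    exact mul_lt_iff_lt_one_right (show (0:ℝ) < (1+q)/6 by positivity)
  refine ⟨part1, ?_⟩
  -- reformulation of F
  have hΦ : ∀ δ : ℝ, 256*(1-q)^2 * F δ =
      3*((1-q)^2*((4-δ*(1-q)^2)*(64-16*(δ*(1-q)^2))) +
        (1+q)^2*((δ*(1-q)^2)^3*(4-δ*(1-q)^2))) := by
    intro δ; rw [hF]; ring
  have hiff : ∀ δ : ℝ, (1 ≤ F δ) ↔ 256*(1-q)^2 ≤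
      3*((1-q)^2*((4-δ*(1-q)^2)*(64-16*(δ*(1-q)^2))) +
        (1+q)^2*((δ*(1-q)^2)^3*(4-δ*(1-q)^2))) := by
    intro δ
    rw [← hΦ δ, le_mul_iff_one_le_right (by positivity)]
  set S : Set ℝ := {δ : ℝ | δ ∈ Set.Ioc (0:ℝ) (4 / (1 - q) ^ 2) ∧ 1 ≤ F δ} with hS
  have hmemS : (1/(1-q)^2) ∈ S := by
    constructor
    · constructor
      · positivity
      · rw [div_le_div_iff₀ hA hA]; nlinarith
    · rw [hiff]
      have ht : (1/(1-q)^2)*(1-q)^2 = 1 := by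
        have : (1:ℝ) - q ≠ 0 := ne_of_gt (by linarith)
        field_simp
      rw [ht]
      exact PPI.pos3 _ _ 1 hA hc1 (by norm_num) (by norm_num)
  have hSne : S.Nonempty := ⟨_, hmemS⟩
  have hub : ∀ δ ∈ S, δ ≤ (39/10)/(1-q)^2 := by
    intro δ ⟨⟨hδ0, hδ4⟩, hδF⟩
    by_contra hcon
    push_neg at hcon
    have ht1 : 39/10 ≤ δ*(1-q)^2 := by
      rw [div_lt_iff₀ hA] at hcon; linarith
    have ht4 : δ*(1-q)^2 ≤ 4 := by
      rw [le_div_iff₀ hA] at hδ4; exact hδ4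
    have := PPI.neg4 _ _ _ hA hc2 ht1 ht4
    rw [hiff] at hδF
    linarith
  have hbdd : BddAbove S := ⟨(39/10)/(1-q)^2, hub⟩
  set δq := sSup S with hδq
  have hδqlb : 1/(1-q)^2 ≤ δq := le_csSup hbdd hmemS
  have hδqub : δq ≤ (39/10)/(1-q)^2 := csSup_le hSne hub
  have hδqmem : δq ∈ Set.Ioo (0:ℝ) (4 / (1 - q) ^ 2) := by
    constructor
    · have : (0:ℝ) < 1/(1-q)^2 := by positivity
      linarith
    · have : (39/10:ℝ)/(1-q)^2 < 4/(1-q)^2 := by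
        rw [div_lt_div_iff₀ hA hA]; nlinarith
      linarith
  have hFc : Continuous F := by
    have hFe : F = fun δ : ℝ => (3 / 256) * (4 - δ * (1 - q) ^ 2) *
      (64 - 16 * δ * (1 - q) ^ 2 + δ ^ 3 * (1 - q) ^ 4 * (1 + q) ^ 2) := funext hF
    rw [hFe]; fun_prop
  have hFδq : 1 ≤ F δq := by
    have hcl : δq ∈ closure S := csSup_mem_closure hSne hbdd
    have hclosed : IsClosed {x : ℝ | 1 ≤ F x} := isClosed_le continuous_const hFc
    exact hclosed.closure_subset_iff.mpr (fun x hx => hx.2) hcl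
  have propA : ∀ δ ∈ Set.Ioc δq (4 / (1 - q) ^ 2), F δ < 1 := by
    intro δ ⟨hδl, hδr⟩
    by_contra hcon
    push_neg at hcon
    have : δ ∈ S := ⟨⟨lt_trans hδqmem.1 hδl, hδr⟩, hcon⟩
    have := le_csSup hbdd this
    linarith
  have propB : ∀ δ ∈ Set.Ioc (0:ℝ) δq, 1 ≤ F δ := by
    intro δ ⟨hδ0, hδr⟩
    rcases eq_or_lt_of_le hδr with heq | hlt
    · rw [heq]; exact hFδq
    -- δ < δq : there is s ∈ S with δ < s
    obtain ⟨s, hsS, hδs⟩ : ∃ s ∈ S, δ < s := by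
      by_contra hcon
      push_neg at hcon
      have : δq ≤ δ := csSup_le hSne hcon
      linarith
    rcases le_or_gt (δ*(1-q)^2) 3 with h3 | h3
    · rw [hiff]
      exact PPI.pos3 _ _ _ hA hc1 (by positivity) h3
    · -- δ(1-q)² > 3 ; use monotonicity on [3,4]
      obtain ⟨⟨hs0', hs4⟩, hsF⟩ := hsS
      have htδ : 3 ≤ δ*(1-q)^2 := h3.le
      have htlt : δ*(1-q)^2 < s*(1-q)^2 := by
        exact mul_lt_mul_of_pos_right hδs hA
      have hts4 : s*(1-q)^2 ≤ 4 := by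
        rw [le_div_iff₀ hA] at hs4; exact hs4
      have hmono := PPI.mono34 ((1-q)^2) ((1+q)^2) (δ*(1-q)^2) (s*(1-q)^2)
        hA hB.le htδ htlt hts4
      rw [hiff] at hsF ⊢
      linarith
  refine ⟨δq, ⟨hδqmem, propA, propB⟩, ?_⟩
  rintro y ⟨hymem, hyA, hyB⟩
  rcases lt_trichotomy y δq with h | h | h
  · exfalso
    have h1 := hyA δq ⟨h, hδqmem.2.le⟩
    have h2 := propB δq ⟨hδqmem.1, le_refl _⟩
    linarith
  · exact h
  · exfalso
    have h1 := propA y ⟨h, hymem.2.le⟩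
    have h2 := hyB y ⟨hymem.1, le_refl _⟩
    linarith
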